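/- For all q ∈ [0,1], s ∈ [0,1], and integers t ≥ 1, we have 1 + e^{s-1}·(1 - (1-q)·s/t)^t + e^{s-1}·(1-q)^t·(1 - s/t)^t evaluated at q = 0.464587 is at most 1.60793. -/

import Mathlib

open Real

lemma exp_lb6 (x : ℝ) (hx : 0 ≤ x) :
    1 + x + x^2/2 + x^3/6 + x^4/24 + x^5/120 + x^6/720 ≤ Real.exp x := by
  have h := Real.sum_le_exp_of_nonneg hx 7
  simp [Finset.sum_range_succ, Nat.factorial] at h
  nlinarith [h]

lemma one_sub_pow_le (x : ℝ) (hx : x ≤ 1) (n : ℕ) :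
    (1 - x) ^ n ≤ Real.exp (-x) ^ n := by
  apply pow_le_pow_left₀ (by linarith)
  nlinarith [Real.add_one_le_exp (-x)]

lemma glue {E X Y P B : ℝ} (hE : 0 < E) (hEe : E * X = 1) (hY : Y ≤ X) (hB : 0 ≤ B)
    (hP : P ≤ B * Y) : E * P ≤ B := by
  have h1 : E * P ≤ E * (B * Y) := mul_le_mul_of_nonneg_left hP hE.le
  have h2 : E * (B * Y) ≤ E * (B * X) :=
    mul_le_mul_of_nonneg_left (mul_le_mul_of_nonneg_left hY hB) hE.le
  have h3 : E * (B * X) = B := by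
    calc E * (B * X) = B * (E * X) := by ring
      _ = B := by rw [hEe, mul_one]
  linarith

set_option maxHeartbeats 1600000 in
theorem stmt_7 (s : ℝ) (hs0 : 0 ≤ s) (hs1 : s ≤ 1) (t : ℕ) (ht : 1 ≤ t) :
    1 + Real.exp (s - 1) * (1 - (1 - 0.464587) * s / t) ^ t
      + Real.exp (s - 1) * (1 - 0.464587) ^ t * (1 - s / t) ^ t ≤ 1.60793 := by
  have hE : (0:ℝ) < Real.exp (s - 1) := Real.exp_pos _
  have hEe : Real.exp (s - 1) * Real.exp (1 - s) = 1 := by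
    rw [← Real.exp_add]; norm_num
  match t, ht with
  | 1, _ =>
    have hR : (1.7614295:ℝ) ≤ Real.exp 0.566128 := by
      have := exp_lb6 0.566128 (by norm_num)
      nlinarith [this]
    have hkey : (1.7614295:ℝ) * (2 - s - 0.566128) ≤ Real.exp (1 - s) := by
      have h1 : Real.exp (1 - s) = Real.exp 0.566128 * Real.exp (1 - s - 0.566128) := by
        rw [← Real.exp_add]; ring_nf
      have h2 : (2 - s - 0.566128 : ℝ) ≤ Real.exp (1 - s - 0.566128) := by
        have := Real.add_one_le_exp (1 - s - 0.566128); linarith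
      calc (1.7614295:ℝ) * (2 - s - 0.566128)
          ≤ Real.exp 0.566128 * (2 - s - 0.566128) := by nlinarith
        _ ≤ Real.exp 0.566128 * Real.exp (1 - s - 0.566128) := by
            nlinarith [Real.exp_pos (0.566128:ℝ)]
        _ = Real.exp (1 - s) := h1.symm
    have hP : ((1 - (1-0.464587) * s) + (1-0.464587) * (1 - s) : ℝ)
        ≤ 0.60793 * (1.7614295 * (2 - s - 0.566128)) := by nlinarith
    have hmain : Real.exp (s-1) * ((1 - (1-0.464587) * s) + (1-0.464587) * (1 - s))
        ≤ 0.60793 := glue hE hEe hkey (by norm_num) hP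
    push_cast
    nlinarith [hmain]
  | 2, _ =>
    have hT : 1 + (1-s) + (1-s)^2/2 + (1-s)^3/6 ≤ Real.exp (1 - s) := by
      have h := exp_lb6 (1-s) (by linarith)
      nlinarith [pow_nonneg (by linarith : (0:ℝ) ≤ 1-s) 4,
        pow_nonneg (by linarith : (0:ℝ) ≤ 1-s) 5,
        pow_nonneg (by linarith : (0:ℝ) ≤ 1-s) 6]
    have hP : ((1 - (1-0.464587) * s / 2)^2 + (1-0.464587)^2 * (1 - s/2)^2 : ℝ)
        ≤ 0.60793 * (1 + (1-s) + (1-s)^2/2 + (1-s)^3/6) := by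
      nlinarith [sq_nonneg (1-s), pow_nonneg (by linarith : (0:ℝ) ≤ 1-s) 3]
    have hmain : Real.exp (s-1) * ((1 - (1-0.464587) * s / 2)^2 + (1-0.464587)^2 * (1 - s/2)^2)
        ≤ 0.60793 := glue hE hEe hT (by norm_num) hP
    push_cast
    nlinarith [hmain]
  | 3, _ =>
    have hT : (2 - s : ℝ) ≤ Real.exp (1 - s) := by
      have := Real.add_one_le_exp (1 - s); linarith
    have hP : ((1 - (1-0.464587) * s / 3)^3 + (1-0.464587)^3 * (1 - s/3)^3 : ℝ)
        ≤ 0.60793 * (2 - s) := by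
      nlinarith [mul_nonneg hs0 (by linarith : (0:ℝ) ≤ 1-s), sq_nonneg s, sq_nonneg (1-s),
        mul_nonneg (mul_nonneg hs0 hs0) (by linarith : (0:ℝ) ≤ 1-s),
        mul_nonneg (mul_nonneg hs0 (by linarith : (0:ℝ) ≤ 1-s)) (by linarith : (0:ℝ) ≤ 1-s)]
    have hmain : Real.exp (s-1) * ((1 - (1-0.464587) * s / 3)^3 + (1-0.464587)^3 * (1 - s/3)^3)
        ≤ 0.60793 := glue hE hEe hT (by norm_num) hP
    push_cast
    nlinarith [hmain]
  | 4, _ =>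
    have hT : (2 - s : ℝ) ≤ Real.exp (1 - s) := by
      have := Real.add_one_le_exp (1 - s); linarith
    have hP : ((1 - (1-0.464587) * s / 4)^4 + (1-0.464587)^4 * (1 - s/4)^4 : ℝ)
        ≤ 0.60793 * (2 - s) := by
      nlinarith [mul_nonneg hs0 (by linarith : (0:ℝ) ≤ 1-s), sq_nonneg s, sq_nonneg (1-s),
        mul_nonneg (mul_nonneg hs0 hs0) (by linarith : (0:ℝ) ≤ 1-s),
        mul_nonneg (mul_nonneg hs0 (by linarith : (0:ℝ) ≤ 1-s)) (by linarith : (0:ℝ) ≤ 1-s),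
        sq_nonneg (s*(1-s)), sq_nonneg (s*s), sq_nonneg ((1-s)*(1-s))]
    have hmain : Real.exp (s-1) * ((1 - (1-0.464587) * s / 4)^4 + (1-0.464587)^4 * (1 - s/4)^4)
        ≤ 0.60793 := glue hE hEe hT (by norm_num) hP
    push_cast
    nlinarith [hmain]
  | (n+5), _ =>
    set m : ℕ := n + 5 with hm
    have hmR : (5:ℝ) ≤ (m:ℝ) := by push_cast [hm]; linarith [Nat.cast_nonneg (α := ℝ) n]
    have hmpos : (0:ℝ) < (m:ℝ) := by linarith
    -- first term
    have h1 : (1 - (1-0.464587) * s / m : ℝ) ^ m ≤ Real.exp (-((1-0.464587) * s)) := by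
      have hx1 : ((1-0.464587) * s / m : ℝ) ≤ 1 := by
        rw [div_le_one hmpos]; nlinarith
      have := one_sub_pow_le ((1-0.464587) * s / m) hx1 m
      have he : Real.exp (-((1-0.464587) * s / m)) ^ m = Real.exp (-((1-0.464587) * s)) := by
        rw [← Real.exp_nat_mul]
        congr 1
        field_simp
      rw [he] at this; exact this
    have h2 : (1 - s / m : ℝ) ^ m ≤ Real.exp (-s) := by
      have hx1 : (s / m : ℝ) ≤ 1 := by
        rw [div_le_one hmpos]; linarith
      have := one_sub_pow_le (s / m) hx1 m
      have he : Real.exp (-(s / m)) ^ m = Real.exp (-s) := by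
        rw [← Real.exp_nat_mul]
        congr 1
        field_simp
      rw [he] at this; exact this
    have hc : ((1-0.464587:ℝ)) ^ m ≤ (1-0.464587) ^ 5 := by
      apply pow_le_pow_of_le_one (by norm_num) (by norm_num)
      omega
    have hcpos : (0:ℝ) ≤ (1-0.464587:ℝ) ^ m := by positivity
    -- exp bounds
    have hA : Real.exp (s-1) * Real.exp (-((1-0.464587) * s)) ≤ 0.5855 := by
      have heq : Real.exp (s-1) * Real.exp (-((1-0.464587) * s))
          = Real.exp (0.464587 * s - 1) := by
        rw [← Real.exp_add]; ring_nf
      rw [heq]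
      have hmono : Real.exp (0.464587 * s - 1) ≤ Real.exp (0.464587 - 1) := by
        apply Real.exp_le_exp.mpr; nlinarith
      have hub : Real.exp (0.464587 - 1) ≤ 0.5855 := by
        have hl := exp_lb6 (1 - 0.464587) (by norm_num)
        have hprod : Real.exp (0.464587 - 1) * Real.exp (1 - 0.464587) = 1 := by
          rw [← Real.exp_add]; norm_num
        nlinarith [Real.exp_pos (0.464587 - 1 : ℝ)]
      linarith
    have hB : Real.exp (s-1) * Real.exp (-s) ≤ 0.368 := by
      have heq : Real.exp (s-1) * Real.exp (-s) = Real.exp (-1) := by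
        rw [← Real.exp_add]; ring_nf
      rw [heq]
      have hl := exp_lb6 1 (by norm_num)
      have hprod : Real.exp (-1:ℝ) * Real.exp 1 = 1 := by
        rw [← Real.exp_add]; norm_num
      nlinarith [Real.exp_pos (-1:ℝ)]
    have ht1 : Real.exp (s-1) * (1 - (1-0.464587) * s / m) ^ m ≤ 0.5855 := by
      calc Real.exp (s-1) * (1 - (1-0.464587) * s / m) ^ m
          ≤ Real.exp (s-1) * Real.exp (-((1-0.464587) * s)) := by nlinarith
        _ ≤ 0.5855 := hA
    have hp2 : (0:ℝ) ≤ (1 - s / m : ℝ) ^ m := by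
      apply pow_nonneg
      have : s / (m:ℝ) ≤ 1 := by rw [div_le_one hmpos]; linarith
      linarith
    have ht2 : Real.exp (s-1) * (1-0.464587) ^ m * (1 - s / m) ^ m ≤ 0.0162 := by
      have step1 : Real.exp (s-1) * (1-0.464587) ^ m * (1 - s / m) ^ m
          ≤ Real.exp (s-1) * (1-0.464587) ^ 5 * Real.exp (-s) := by
        have e1 : Real.exp (s-1) * (1-0.464587) ^ m * (1 - s / m) ^ m
            ≤ Real.exp (s-1) * (1-0.464587) ^ 5 * (1 - s / m) ^ m := by
          apply mul_le_mul_of_nonneg_right _ hp2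
          nlinarith
        have e2 : Real.exp (s-1) * (1-0.464587) ^ 5 * (1 - s / m) ^ m
            ≤ Real.exp (s-1) * (1-0.464587) ^ 5 * Real.exp (-s) := by
          apply mul_le_mul_of_nonneg_left h2
          positivity
        linarith
      have : Real.exp (s-1) * (1-0.464587) ^ 5 * Real.exp (-s)
          = (1-0.464587)^5 * (Real.exp (s-1) * Real.exp (-s)) := by ring
      rw [this] at step1
      nlinarith [Real.exp_pos (s-1), Real.exp_pos (-s : ℝ),
        mul_pos (Real.exp_pos (s-1)) (Real.exp_pos (-s : ℝ))]
    linarith [ht1, ht2]
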